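/- arXiv:2408.05282 — 2 statements merged into one kernel-verified Lean document; each statement's English description precedes it below -/
import Mathlib

section
/- Let H be a canonical 2-edge cover of a graph G. Then cost(H) ≤ (5/4)·|E(H)|. -/
open SimpleGraph

open scoped Classical

namespace ECSS

/-! ### Generic graph notions -/

section Generic

variable {W : Type*}

/-- The number of connected components of a graph. -/
noncomputable def numComponents (Γ : SimpleGraph W) : ℕ :=
  Nat.card Γ.ConnectedComponent

/-- Deleting the vertex set `S` increases the number of connected components. -/
def IsCutSet (Γ : SimpleGraph W) (S : Set W) : Prop :=
  numComponents Γ < numComponents (Γ.induce Sᶜ)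

/-- A `k`-vertex cut: a set of `k` vertices whose deletion increases the number of
connected components. -/
def IsVertexCut (Γ : SimpleGraph W) (S : Set W) (k : ℕ) : Prop :=
  S.ncard = k ∧ IsCutSet Γ S

/-- 2-vertex-connected: connected and with no cut vertex. -/
def TwoVertexConnected (Γ : SimpleGraph W) : Prop :=
  Γ.Connected ∧ ∀ v : W, ¬ IsCutSet Γ {v}

/-- 2-edge-connected: connected, and still connected after deleting any single edge. -/
def IsTwoEdgeConnected (Γ : SimpleGraph W) : Prop :=
  Γ.Connected ∧ ∀ e ∈ Γ.edgeSet, (Γ.deleteEdges {e}).Connected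

/-- A small 3-vertex cut: deleting it leaves exactly two connected components,
one of which has at most 6 vertices. -/
def IsSmall3Cut (Γ : SimpleGraph W) (S : Set W) : Prop :=
  IsVertexCut Γ S 3 ∧ numComponents (Γ.induce Sᶜ) = 2 ∧
    ∃ c : (Γ.induce Sᶜ).ConnectedComponent, c.supp.ncard ≤ 6

/-- A large 3-vertex cut: a 3-vertex cut that is not small. -/
def IsLarge3Cut (Γ : SimpleGraph W) (S : Set W) : Prop :=
  IsVertexCut Γ S 3 ∧ ¬ IsSmall3Cut Γ S

/-- An isolating 2-vertex cut: deleting it leaves exactly two connected components,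
one of which has size 1. -/
def IsIsolating2Cut (Γ : SimpleGraph W) (S : Set W) : Prop :=
  IsVertexCut Γ S 2 ∧ numComponents (Γ.induce Sᶜ) = 2 ∧
    ∃ c : (Γ.induce Sᶜ).ConnectedComponent, c.supp.ncard = 1

/-- A non-isolating 2-vertex cut: a 2-vertex cut that is not isolating. -/
def IsNonIsolating2Cut (Γ : SimpleGraph W) (S : Set W) : Prop :=
  IsVertexCut Γ S 2 ∧ ¬ IsIsolating2Cut Γ S

/-- An irrelevant edge `xy`: an edge such that `{x, y}` is a 2-vertex cut. -/
def IsIrrelevantEdge (Γ : SimpleGraph W) (x y : W) : Prop :=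
  Γ.Adj x y ∧ IsVertexCut Γ {x, y} 2

/-- A matching of size `k` between `V1` and `V2`: `k` pairwise vertex-disjoint edges,
each with one endpoint in `V1` and the other in `V2`. -/
def HasMatchingBetween (Γ : SimpleGraph W) (V1 V2 : Set W) (k : ℕ) : Prop :=
  ∃ f g : Fin k → W,
    (∀ i, f i ∈ V1 ∧ g i ∈ V2 ∧ Γ.Adj (f i) (g i)) ∧
    ∀ i j, i ≠ j → f i ≠ f j ∧ g i ≠ g j ∧ f i ≠ g j ∧ g i ≠ f j

/-- A non-trivial segment: a maximal 2-node-connected (induced) subgraph with at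
least 3 nodes. -/
def IsNontrivialSegment (Γ : SimpleGraph W) (S : Set W) : Prop :=
  3 ≤ S.ncard ∧ TwoVertexConnected (Γ.induce S) ∧
    ∀ S' : Set W, S ⊆ S' → TwoVertexConnected (Γ.induce S') → S' = S

/-- A trivial segment: a node that is not contained in any non-trivial segment. -/
def IsTrivialSegment (Γ : SimpleGraph W) (A : W) : Prop :=
  ∀ S : Set W, IsNontrivialSegment Γ S → A ∉ S

/-- A pendant node: a node adjacent to exactly one other node. -/
def IsPendantNode (Γ : SimpleGraph W) (A : W) : Prop :=
  (Γ.neighborSet A).ncard = 1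

/-- The graph `Γ` is a path from `P` to `Q` (of length at least 1):
there is a path walk from `P` to `Q` visiting every vertex and using every edge. -/
def IsPathGraphWithEnds (Γ : SimpleGraph W) (P Q : W) : Prop :=
  ∃ p : Γ.Walk P Q, p.IsPath ∧ 1 ≤ p.length ∧ (∀ n : W, n ∈ p.support) ∧
    ∀ e ∈ Γ.edgeSet, e ∈ p.edges

end Generic

/-! ### Subgraph notions -/

variable {V : Type*}

/-- A subgraph is 2-edge-connected: connected and still connected after deleting any
single edge. -/
def SubTwoEC {G : SimpleGraph V} (K : G.Subgraph) : Prop :=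
  K.Connected ∧ ∀ e ∈ K.edgeSet, (K.deleteEdges {e}).Connected

/-- A 2-edge-connected spanning subgraph (2-ECSS) of `G`. -/
def IsTwoECSS (G : SimpleGraph V) (H : G.Subgraph) : Prop :=
  H.IsSpanning ∧ SubTwoEC H

/-- The minimum number of edges of a 2-ECSS of `G`. -/
noncomputable def opt (G : SimpleGraph V) : ℕ :=
  sInf {n : ℕ | ∃ H : G.Subgraph, IsTwoECSS G H ∧ H.edgeSet.ncard = n}

/-- `C` is a (maximal) connected component of `H`. -/
def IsComponent {G : SimpleGraph V} (H C : G.Subgraph) : Prop :=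
  C ≤ H ∧ C.Connected ∧ ∀ C' : G.Subgraph, C ≤ C' → C' ≤ H → C'.Connected → C' = C

/-- `B` is a block of `C`: a maximal 2-edge-connected subgraph. -/
def IsBlock {G : SimpleGraph V} (C B : G.Subgraph) : Prop :=
  B ≤ C ∧ SubTwoEC B ∧ ∀ B' : G.Subgraph, B ≤ B' → B' ≤ C → SubTwoEC B' → B' = B

/-- `e` is a bridge of the subgraph `C`: deleting it disconnects its endpoints. -/
def IsBridgeIn {G : SimpleGraph V} (C : G.Subgraph) (e : Sym2 V) : Prop :=
  e ∈ C.edgeSet ∧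
    ∀ a b : V, s(a, b) = e → ¬ (C.deleteEdges {e}).spanningCoe.Reachable a b

/-- The subgraph contains a bridge ("complex" when it is a component). -/
def HasBridge {G : SimpleGraph V} (C : G.Subgraph) : Prop :=
  ∃ e, IsBridgeIn C e

/-- The subgraph has no bridges. -/
def Bridgeless {G : SimpleGraph V} (H : G.Subgraph) : Prop :=
  ∀ e : Sym2 V, ¬ IsBridgeIn H e

/-- The subgraph `C` is a cycle on `i` vertices (connected and 2-regular). -/
def IsCycleOn {G : SimpleGraph V} (C : G.Subgraph) (i : ℕ) : Prop :=
  C.Connected ∧ C.verts.ncard = i ∧ ∀ v ∈ C.verts, (C.neighborSet v).ncard = 2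

/-- A block `B` of a component `C` is pendant if `C` minus the vertices of `B`
is connected. -/
def IsPendant {G : SimpleGraph V} (C B : G.Subgraph) : Prop :=
  (C.deleteVerts B.verts).Connected

/-- A 2-edge cover: a spanning subgraph in which every vertex has degree at least 2. -/
def IsTwoEdgeCover {G : SimpleGraph V} (H : G.Subgraph) : Prop :=
  H.IsSpanning ∧ ∀ v : V, 2 ≤ (H.neighborSet v).ncard

/-- A 2-edge cover is triangle-free if no component is a triangle. -/
def IsTriangleFree {G : SimpleGraph V} (H : G.Subgraph) : Prop :=
  ∀ C : G.Subgraph, IsComponent H C → ¬ IsCycleOn C 3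

/-- A canonical 2-edge cover: every non-complex component is a cycle on `i` vertices
for some `4 ≤ i ≤ 7` or has at least 8 edges, and in every complex component each
pendant block has at least 6 edges and each non-pendant block has at least 4 edges. -/
def IsCanonical {G : SimpleGraph V} (H : G.Subgraph) : Prop :=
  (∀ C : G.Subgraph, IsComponent H C → ¬ HasBridge C →
      (∃ i, 4 ≤ i ∧ i ≤ 7 ∧ IsCycleOn C i) ∨ 8 ≤ C.edgeSet.ncard) ∧
  (∀ C : G.Subgraph, IsComponent H C → HasBridge C → ∀ B : G.Subgraph, IsBlock C B →
      (IsPendant C B → 6 ≤ B.edgeSet.ncard) ∧ (¬ IsPendant C B → 4 ≤ B.edgeSet.ncard))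

/-- Credit of a single component: a complex component gets its component credit 1,
plus 1 for each block, plus 1/4 for each bridge; a 2EC component with at least 8
edges gets 2; a 2EC component that is a cycle `C_i` gets `i/4` (its number of edges
over 4). -/
noncomputable def componentCredit {G : SimpleGraph V} (C : G.Subgraph) : ℚ :=
  if HasBridge C then
    1 + ({B : G.Subgraph | IsBlock C B}.ncard : ℚ)
      + ({e : Sym2 V | IsBridgeIn C e}.ncard : ℚ) / 4
  else if 8 ≤ C.edgeSet.ncard then 2
  else (C.edgeSet.ncard : ℚ) / 4

/-- Total credit of a 2-edge cover: sum of the credits of its components. -/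
noncomputable def credit {G : SimpleGraph V} (H : G.Subgraph) : ℚ :=
  ∑ᶠ C ∈ {C : G.Subgraph | IsComponent H C}, componentCredit C

/-- Cost of a 2-edge cover: number of edges plus total credit. -/
noncomputable def cost {G : SimpleGraph V} (H : G.Subgraph) : ℚ :=
  (H.edgeSet.ncard : ℚ) + credit H

/-- An `α`-contractible subgraph: a 2-edge-connected subgraph `C` (with at least one
edge) such that every 2-ECSS of `G` contains at least `|E(C)|/α` edges with both
endpoints in `V(C)`. -/
def IsContractible (α : ℚ) (G : SimpleGraph V) (C : G.Subgraph) : Prop :=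
  SubTwoEC C ∧ ∀ H : G.Subgraph, IsTwoECSS G H →
    (C.edgeSet.ncard : ℚ) / α ≤ ({e ∈ H.edgeSet | ∀ x ∈ e, x ∈ C.verts}.ncard : ℚ)

/-- An `(α, ε)`-structured graph: simple (automatic), 2-vertex-connected, with at
least `4/ε` vertices, and containing no `α`-contractible subgraph with at most `2/ε`
edges, no irrelevant edge, no non-isolating 2-vertex cut, and no large 3-vertex cut. -/
def IsStructured (α ε : ℚ) (G : SimpleGraph V) : Prop :=
  TwoVertexConnected G ∧ (4 / ε ≤ (Nat.card V : ℚ)) ∧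
  (∀ C : G.Subgraph, C.edgeSet.Nonempty → (C.edgeSet.ncard : ℚ) ≤ 2 / ε →
      ¬ IsContractible α G C) ∧
  (∀ x y : V, ¬ IsIrrelevantEdge G x y) ∧
  (∀ S : Set V, ¬ IsNonIsolating2Cut G S) ∧
  (∀ S : Set V, ¬ IsLarge3Cut G S)

/-! ### The component graph -/

/-- The component graph `Ĝ_H`: nodes are the components of `H`, two nodes being
adjacent if some edge of `G` joins the corresponding components (self-loops are
discarded). -/
def compGraph {G : SimpleGraph V} (H : G.Subgraph) :
    SimpleGraph {C : G.Subgraph // IsComponent H C} where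
  Adj A B := A ≠ B ∧ ∃ a b : V, a ∈ A.1.verts ∧ b ∈ B.1.verts ∧ G.Adj a b
  symm := by
    refine ⟨?_⟩
    rintro A B ⟨hne, a, b, ha, hb, hab⟩
    exact ⟨hne.symm, b, a, hb, ha, hab.symm⟩
  loopless := by
    refine ⟨?_⟩
    rintro A ⟨hne, -⟩
    exact hne rfl

/-- A cycle in the component graph `Ĝ_H` (as a multigraph), given by pairwise
distinct components `D i` and pairwise distinct edges of `G`, the `i`-th edge
joining a vertex `a i` of `D i` to a vertex `b i` of `D (i+1)`. -/
def IsCompCycle {G : SimpleGraph V} (H : G.Subgraph) {m : ℕ}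
    (D : Fin (m + 2) → G.Subgraph) (a b : Fin (m + 2) → V) : Prop :=
  Function.Injective D ∧ (∀ i, IsComponent H (D i)) ∧
  (∀ i, a i ∈ (D i).verts ∧ b i ∈ (D (i + 1)).verts ∧ G.Adj (a i) (b i)) ∧
  Function.Injective fun i => s(a i, b i)

/-! ### Contracting the 2-edge-connected components: solution types -/

/-- `x` and `y` lie in the same 2-edge-connected component of `K`: they are
reachable, and remain reachable after the deletion of any single edge. -/
def SameTwoEC {G : SimpleGraph V} (K : G.Subgraph) (x y : V) : Prop :=
  K.spanningCoe.Reachable x y ∧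
    ∀ e ∈ K.edgeSet, (K.deleteEdges {e}).spanningCoe.Reachable x y

/-- The setoid on the vertices of `K` identifying vertices in the same
2-edge-connected component. -/
def twoECSetoid {G : SimpleGraph V} (K : G.Subgraph) : Setoid K.verts where
  r x y := SameTwoEC K x.1 y.1
  iseqv := by
    constructor
    · exact fun x => ⟨Reachable.refl _, fun e _ => Reachable.refl _⟩
    · exact fun h => ⟨h.1.symm, fun e he => (h.2 e he).symm⟩
    · exact fun h h' => ⟨h.1.trans h'.1, fun e he => (h.2 e he).trans (h'.2 e he)⟩

/-- The super-nodes: 2-edge-connected components of `K`, as a quotient. -/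
def SNode {G : SimpleGraph V} (K : G.Subgraph) :=
  Quotient (twoECSetoid K)

/-- The graph obtained from `K` by contracting each 2-edge-connected component into
a single super-node. -/
def contractTwoEC {G : SimpleGraph V} (K : G.Subgraph) : SimpleGraph (SNode K) where
  Adj P Q := P ≠ Q ∧ ∃ x y : K.verts,
    Quotient.mk (twoECSetoid K) x = P ∧ Quotient.mk (twoECSetoid K) y = Q ∧ K.Adj x.1 y.1
  symm := by
    refine ⟨?_⟩
    rintro P Q ⟨hne, x, y, hx, hy, hxy⟩
    exact ⟨hne.symm, y, x, hy, hx, hxy.symm⟩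
  loopless := by
    refine ⟨?_⟩
    rintro P ⟨hne, -⟩
    exact hne rfl

/-- The super-node containing a vertex. -/
def cls {G : SimpleGraph V} (K : G.Subgraph) (x : K.verts) : SNode K :=
  Quotient.mk (twoECSetoid K) x

/-- Type A: the contraction is a single super-node. -/
def TypeA {G : SimpleGraph V} (K : G.Subgraph) (u v w : K.verts) : Prop :=
  ∀ n : SNode K, n = cls K u

/-- Type B1: the contraction is a path `C₁ - ⋯ - C_k` of length at least 1 with
`u, v, w ∈ C₁ ∪ C_k` and at most two of `u, v, w` in each of `C₁` and `C_k`. -/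
def TypeB1 {G : SimpleGraph V} (K : G.Subgraph) (u v w : K.verts) : Prop :=
  ∃ P Q : SNode K, IsPathGraphWithEnds (contractTwoEC K) P Q ∧
    (cls K u = P ∨ cls K u = Q) ∧ (cls K v = P ∨ cls K v = Q) ∧
    (cls K w = P ∨ cls K w = Q) ∧
    ¬ (cls K u = P ∧ cls K v = P ∧ cls K w = P) ∧
    ¬ (cls K u = Q ∧ cls K v = Q ∧ cls K w = Q)

/-- Type B2: the contraction consists of two isolated super-nodes, each containing
at most two of `u, v, w`. -/
def TypeB2 {G : SimpleGraph V} (K : G.Subgraph) (u v w : K.verts) : Prop :=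
  ∃ P Q : SNode K, P ≠ Q ∧ (∀ n : SNode K, n = P ∨ n = Q) ∧
    (∀ P' Q' : SNode K, ¬ (contractTwoEC K).Adj P' Q') ∧
    ¬ (cls K u = cls K v ∧ cls K v = cls K w)

/-- Type C1: the contraction is a tree and `u, v, w` lie in three distinct
super-nodes. -/
def TypeC1 {G : SimpleGraph V} (K : G.Subgraph) (u v w : K.verts) : Prop :=
  (contractTwoEC K).IsTree ∧
    cls K u ≠ cls K v ∧ cls K u ≠ cls K w ∧ cls K v ≠ cls K w

/-- Type C2: the contraction is a path of length at least 1 together with one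
isolated super-node, such that each of the two path ends and the isolated super-node
contains exactly one of `u, v, w`. -/
def TypeC2 {G : SimpleGraph V} (K : G.Subgraph) (u v w : K.verts) : Prop :=
  ∃ P Q R : SNode K,
    (∃ p : (contractTwoEC K).Walk P Q, p.IsPath ∧ 1 ≤ p.length ∧ R ∉ p.support ∧
      (∀ n : SNode K, n ∈ p.support ∨ n = R) ∧
      ∀ e ∈ (contractTwoEC K).edgeSet, e ∈ p.edges) ∧
    cls K u ≠ cls K v ∧ cls K u ≠ cls K w ∧ cls K v ≠ cls K w ∧
    ({cls K u, cls K v, cls K w} : Set (SNode K)) = {P, Q, R}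

/-- Type C3: the contraction consists of the three isolated super-nodes of
`u`, `v` and `w`. -/
def TypeC3 {G : SimpleGraph V} (K : G.Subgraph) (u v w : K.verts) : Prop :=
  cls K u ≠ cls K v ∧ cls K u ≠ cls K w ∧ cls K v ≠ cls K w ∧
  (∀ n : SNode K, n = cls K u ∨ n = cls K v ∨ n = cls K w) ∧
  ∀ P Q : SNode K, ¬ (contractTwoEC K).Adj P Q

/-- `K` is of one of the six solution types with respect to `u, v, w`. -/
def OfAnyType {G : SimpleGraph V} (K : G.Subgraph) (u v w : K.verts) : Prop :=
  TypeA K u v w ∨ TypeB1 K u v w ∨ TypeB2 K u v w ∨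
    TypeC1 K u v w ∨ TypeC2 K u v w ∨ TypeC3 K u v w

/-! ### Sides of a 3-vertex cut, contracted sides, and related helpers -/

/-- The induced subgraph `G[V₁ ∪ {u,v,w}]` (as a subgraph of `G`). -/
def sideOne (G : SimpleGraph V) (V1 : Set V) (u v w : V) : G.Subgraph :=
  (⊤ : G.Subgraph).induce (V1 ∪ {u, v, w})

/-- The induced subgraph `G[V₂ ∪ {u,v,w}]` minus the edges `uv`, `vw`, `uw`. -/
def sideTwo (G : SimpleGraph V) (V2 : Set V) (u v w : V) : G.Subgraph :=
  ((⊤ : G.Subgraph).induce (V2 ∪ {u, v, w})).deleteEdges {s(u, v), s(v, w), s(u, w)}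

/-- The connected component of the subgraph `K` containing the vertex `z`. -/
def compOf {G : SimpleGraph V} (K : G.Subgraph) (z : V) : G.Subgraph where
  verts := {y | y ∈ K.verts ∧ K.spanningCoe.Reachable z y}
  Adj x y := K.Adj x y ∧ K.spanningCoe.Reachable z x
  adj_sub := fun h => K.adj_sub h.1
  edge_vert := fun h => ⟨K.edge_vert h.1, h.2⟩
  symm := by
    refine ⟨?_⟩
    rintro x y ⟨hxy, hzx⟩
    exact ⟨hxy.symm, hzx.trans (SimpleGraph.Adj.reachable (by exact hxy))⟩

/-- There is an edge of `Gi` that is not an edge of `Hi` between `A` and `B`. -/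
def CrossEdge {G : SimpleGraph V} (Gi Hi : G.Subgraph) (A B : Set V) : Prop :=
  ∃ a b : V, a ∈ A ∧ b ∈ B ∧ Gi.Adj a b ∧ ¬ Hi.Adj a b

/-- Claim (1) of the spanning-tree lemma for 3-vertex cuts. -/
def ClaimOne {G : SimpleGraph V} (Gi Hi : G.Subgraph) (x : V) : Prop :=
  compOf Hi x ≠ Hi →
    ∃ a b : V, a ∈ (compOf Hi x).verts ∧ b ∈ Hi.verts ∧ b ∉ (compOf Hi x).verts ∧
      Gi.Adj a b ∧ ¬ Hi.Adj a b

/-- Claim (2) of the spanning-tree lemma for 3-vertex cuts. -/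
def ClaimTwo {G : SimpleGraph V} (Gi Hi : G.Subgraph) (u v w : V) : Prop :=
  (Disjoint (compOf Hi u).verts (compOf Hi v).verts ∧
      Disjoint (compOf Hi v).verts (compOf Hi w).verts ∧
      Disjoint (compOf Hi u).verts (compOf Hi w).verts) →
    (CrossEdge Gi Hi (compOf Hi u).verts (compOf Hi v).verts ∧
        CrossEdge Gi Hi (compOf Hi v).verts (compOf Hi w).verts) ∨
      (CrossEdge Gi Hi (compOf Hi v).verts (compOf Hi w).verts ∧
        CrossEdge Gi Hi (compOf Hi u).verts (compOf Hi w).verts) ∨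
      (CrossEdge Gi Hi (compOf Hi u).verts (compOf Hi v).verts ∧
        CrossEdge Gi Hi (compOf Hi u).verts (compOf Hi w).verts)

/-- The condition of the gluing lemma: every edge of `Hi` is in a 2-edge-connected
component of `Hi`, or lies on an `x`-`y` path in `Hi` for distinct
`x, y ∈ {u, v, w}` such that `x` and `y` are also connected in `Hj`. -/
def EdgeCond {G : SimpleGraph V} (Hi Hj : G.Subgraph) (u v w : V) : Prop :=
  ∀ a b : V, Hi.Adj a b →
    SameTwoEC Hi a b ∨
      ∃ x ∈ ({u, v, w} : Set V), ∃ y ∈ ({u, v, w} : Set V), x ≠ y ∧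
        (∃ p : Hi.spanningCoe.Walk x y, p.IsPath ∧ s(a, b) ∈ p.edges) ∧
        Hj.spanningCoe.Reachable x y

/-- The set of all potential edges among a vertex set `S` (used to model the
contraction of `S` into a single vertex). -/
def cliqueOn (S : Set V) : Set (Sym2 V) :=
  {e | ∃ a ∈ S, ∃ b ∈ S, a ≠ b ∧ e = s(a, b)}

/-- The edge set `K` forms a 2-edge-connected spanning subgraph of the graph on `Wt`
with the set `S ⊆ Wt` contracted into a single vertex: modelled by making `S` into a
blob using `cliqueOn S` (whose edges are never deleted). -/
def ContractedTwoECSS (Wt S : Set V) (K : Set (Sym2 V)) : Prop :=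
  ((SimpleGraph.fromEdgeSet (K ∪ cliqueOn S)).induce Wt).Connected ∧
  ∀ e ∈ K, ((SimpleGraph.fromEdgeSet ((K \ {e}) ∪ cliqueOn S)).induce Wt).Connected

end ECSS
namespace ECSS

variable {V : Type*} [Fintype V] [DecidableEq V] {G : SimpleGraph V}

theorem _root_.SimpleGraph.Subgraph.Connected.sup {H K : G.Subgraph} (hH : H.Connected)
    (hK : K.Connected) (hn : (H ⊓ K).verts.Nonempty) : (H ⊔ K).Connected :=
  SimpleGraph.Subgraph.connected_sup hH.preconnected hK.preconnected hn

instance : Finite (G.Subgraph) :=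
  Finite.of_injective (fun K => (K.verts, K.Adj)) (by
    rintro K L h
    rw [Prod.mk.injEq] at h
    exact SimpleGraph.Subgraph.ext h.1 h.2)

lemma deleteEdges_sup (A B : G.Subgraph) (s : Set (Sym2 V)) :
    (A ⊔ B).deleteEdges s = A.deleteEdges s ⊔ B.deleteEdges s := by
  ext v w <;> simp [or_and_right]

lemma deleteEdges_eq_self {A : G.Subgraph} {s : Set (Sym2 V)}
    (h : ∀ e ∈ s, e ∉ A.edgeSet) : A.deleteEdges s = A := by
  ext v w
  · simp
  · simp only [SimpleGraph.Subgraph.deleteEdges_adj, and_iff_left_iff_imp]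
    intro hadj hs
    exact absurd (SimpleGraph.Subgraph.mem_edgeSet.2 hadj) (h _ hs)

lemma deleteEdges_single {A : G.Subgraph} {g : Sym2 V} (h : g ∉ A.edgeSet) :
    A.deleteEdges {g} = A := by
  apply deleteEdges_eq_self
  rintro e he
  rw [Set.mem_singleton_iff] at he
  subst he
  exact h

lemma reachable_coe_of_le {K M : G.Subgraph} (hKM : K ≤ M) (hK : K.Connected)
    {x y : V} (hx : x ∈ K.verts) (hy : y ∈ K.verts) :
    M.coe.Reachable ⟨x, hKM.1 hx⟩ ⟨y, hKM.1 hy⟩ :=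
  SimpleGraph.Reachable.map (SimpleGraph.Subgraph.inclusion hKM)
    (hK.preconnected ⟨x, hx⟩ ⟨y, hy⟩)

lemma reachable_spanningCoe {K : G.Subgraph} (hK : K.Connected)
    {x y : V} (hx : x ∈ K.verts) (hy : y ∈ K.verts) : K.spanningCoe.Reachable x y := by
  obtain ⟨w⟩ := hK.preconnected ⟨x, hx⟩ ⟨y, hy⟩
  exact ⟨w.map ⟨fun a => a.1, fun {a b} h => h⟩⟩

lemma subTwoEC_sup {A B : G.Subgraph} (hA : SubTwoEC A) (hB : SubTwoEC B)
    (hn : (A.verts ∩ B.verts).Nonempty) : SubTwoEC (A ⊔ B) := by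
  obtain ⟨v, hvA, hvB⟩ := hn
  refine ⟨hA.1.sup hB.1 ⟨v, hvA, hvB⟩, ?_⟩
  intro e _
  rw [deleteEdges_sup]
  have hAe : (A.deleteEdges {e}).Connected := by
    by_cases h : e ∈ A.edgeSet
    · exact hA.2 e h
    · rw [deleteEdges_eq_self (by simpa using h)]; exact hA.1
  have hBe : (B.deleteEdges {e}).Connected := by
    by_cases h : e ∈ B.edgeSet
    · exact hB.2 e h
    · rw [deleteEdges_eq_self (by simpa using h)]; exact hB.1
  exact hAe.sup hBe ⟨v, by simp [hvA, hvB]⟩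

lemma exists_block_above {C K : G.Subgraph} (hKC : K ≤ C) (hK : SubTwoEC K) :
    ∃ B, IsBlock C B ∧ K ≤ B := by
  obtain ⟨B, ⟨hKB, hBC, hB⟩, hmax⟩ :=
    Set.Finite.exists_maximalFor id {B : G.Subgraph | K ≤ B ∧ B ≤ C ∧ SubTwoEC B}
      (Set.toFinite _) ⟨K, le_rfl, hKC, hK⟩
  exact ⟨B, ⟨hBC, hB, fun B' hBB' hB'C hB' =>
    le_antisymm (hmax ⟨hKB.trans hBB', hB'C, hB'⟩ hBB') hBB'⟩, hKB⟩

lemma singleton_subTwoEC (v : V) : SubTwoEC (G.singletonSubgraph v) := by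
  refine ⟨SimpleGraph.Subgraph.singletonSubgraph_connected, ?_⟩
  intro e he
  rw [SimpleGraph.edgeSet_singletonSubgraph] at he
  exact absurd he (Set.notMem_empty e)

lemma exists_block_mem {C : G.Subgraph} {v : V} (hv : v ∈ C.verts) :
    ∃ B, IsBlock C B ∧ v ∈ B.verts := by
  obtain ⟨B, hB, hle⟩ := exists_block_above
    ((SimpleGraph.singletonSubgraph_le_iff v C).2 hv) (singleton_subTwoEC v)
  exact ⟨B, hB, hle.1 rfl⟩

lemma block_eq_block {C B1 B2 : G.Subgraph} (h1 : IsBlock C B1) (h2 : IsBlock C B2)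
    {v : V} (hv1 : v ∈ B1.verts) (hv2 : v ∈ B2.verts) : B1 = B2 := by
  have hsup := subTwoEC_sup h1.2.1 h2.2.1 ⟨v, hv1, hv2⟩
  have e1 := h1.2.2 (B1 ⊔ B2) le_sup_left (sup_le h1.1 h2.1) hsup
  have e2 := h2.2.2 (B1 ⊔ B2) le_sup_right (sup_le h1.1 h2.1) hsup
  exact e1.symm.trans e2

lemma block_le_deleteEdges {C B : G.Subgraph} (hB : IsBlock C B) {e : Sym2 V}
    (he : e ∉ B.edgeSet) : B ≤ C.deleteEdges {e} := by
  refine ⟨hB.1.1, fun x y hxy => ?_⟩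
  rw [SimpleGraph.Subgraph.deleteEdges_adj]
  refine ⟨hB.1.2 hxy, fun hmem => ?_⟩
  rw [Set.mem_singleton_iff] at hmem
  exact he (hmem ▸ SimpleGraph.Subgraph.mem_edgeSet.2 hxy)

lemma bridge_not_mem_block {C B : G.Subgraph} (hB : IsBlock C B) {e : Sym2 V}
    (he : IsBridgeIn C e) : e ∉ B.edgeSet := by
  intro hmem
  induction e using Sym2.ind with
  | _ a b =>
    have hconn := hB.2.1.2 _ hmem
    have h1 : a ∈ B.verts := B.edge_vert (SimpleGraph.Subgraph.mem_edgeSet.1 hmem)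
    have h2 : b ∈ B.verts := B.edge_vert (SimpleGraph.Subgraph.mem_edgeSet.1 hmem).symm
    have hre : (B.deleteEdges {s(a,b)}).spanningCoe.Reachable a b :=
      reachable_spanningCoe hconn h1 h2
    have hle : B.deleteEdges {s(a,b)} ≤ C.deleteEdges {s(a,b)} := by
      refine ⟨hB.1.1, fun x y hxy => ?_⟩
      rw [SimpleGraph.Subgraph.deleteEdges_adj] at hxy ⊢
      exact ⟨hB.1.2 hxy.1, hxy.2⟩
    exact he.2 a b rfl (hre.mono (SimpleGraph.Subgraph.spanningCoe_le_of_le hle))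

lemma bridge_blocks_ne {C : G.Subgraph} {a b : V} (he : IsBridgeIn C s(a,b))
    {Ba Bb : G.Subgraph} (hBa : IsBlock C Ba) (hBb : IsBlock C Bb)
    (ha : a ∈ Ba.verts) (hb : b ∈ Bb.verts) : Ba ≠ Bb := by
  rintro rfl
  have hnot : s(a,b) ∉ Ba.edgeSet := bridge_not_mem_block hBa he
  have hle := block_le_deleteEdges hBa hnot
  exact he.2 a b rfl ((reachable_spanningCoe hBa.2.1.1 ha hb).mono
    (SimpleGraph.Subgraph.spanningCoe_le_of_le hle))

end ECSS

namespace ECSS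

variable {V : Type*} [Fintype V] [DecidableEq V] {G : SimpleGraph V} {C : G.Subgraph}

/-- The block graph: vertices are blocks of `C`, adjacency via an edge of `C`. -/
def BG (C : G.Subgraph) : SimpleGraph {B : G.Subgraph // IsBlock C B} where
  Adj A B := A ≠ B ∧ ∃ a b : V, a ∈ A.1.verts ∧ b ∈ B.1.verts ∧ C.Adj a b
  symm := by
    refine ⟨?_⟩
    rintro A B ⟨hne, a, b, ha, hb, hab⟩
    exact ⟨hne.symm, b, a, hb, ha, hab.symm⟩
  loopless := by
    refine ⟨?_⟩
    rintro A ⟨hne, -⟩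
    exact hne rfl

lemma blk_eq {A B : {B : G.Subgraph // IsBlock C B}} {v : V}
    (ha : v ∈ A.1.verts) (hb : v ∈ B.1.verts) : A = B :=
  Subtype.ext (block_eq_block A.2 B.2 ha hb)

lemma edgeSub_le {a b : V} (h : C.Adj a b) : G.subgraphOfAdj (C.adj_sub h) ≤ C := by
  constructor
  · intro v hv
    simp only [SimpleGraph.subgraphOfAdj_verts, Set.mem_insert_iff,
      Set.mem_singleton_iff] at hv
    rcases hv with rfl | rfl
    · exact C.edge_vert h
    · exact C.edge_vert h.symm
  · intro v w hvw
    simp only [SimpleGraph.subgraphOfAdj_adj] at hvw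
    rcases Sym2.eq_iff.1 hvw with ⟨rfl, rfl⟩ | ⟨rfl, rfl⟩
    · exact h
    · exact h.symm

lemma chain_lemma {P Q : {B : G.Subgraph // IsBlock C B}} (q : (BG C).Walk P Q)
    (hq : q.IsPath) :
    ∃ K : G.Subgraph, K ≤ C ∧ K.Connected ∧
      (∀ R : {B : G.Subgraph // IsBlock C B}, R ∈ q.support → R.1 ≤ K) ∧
      (∀ v ∈ K.verts, ∃ R : {B : G.Subgraph // IsBlock C B}, R ∈ q.support ∧ v ∈ R.1.verts) ∧
      (∀ g ∈ K.edgeSet,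
        (∃ R : {B : G.Subgraph // IsBlock C B}, R ∈ q.support ∧ g ∈ R.1.edgeSet) ∨
        (∃ d ∈ q.darts, ∃ u w : V, g = s(u, w) ∧ u ∈ d.fst.1.verts ∧ w ∈ d.snd.1.verts)) ∧
      (∀ g : Sym2 V, ∃ K₁ K₂ : G.Subgraph,
        K.deleteEdges {g} = K₁ ⊔ K₂ ∧ K₁.Connected ∧ K₂.Connected ∧
        P.1.verts ⊆ K₁.verts ∧ Q.1.verts ⊆ K₂.verts) := by
  revert hq
  induction q with
  | nil =>
    rename_i P
    intro _
    refine ⟨P.1, P.2.1, P.2.2.1.1, ?_, ?_, ?_, ?_⟩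
    · intro R hR
      rw [SimpleGraph.Walk.support_nil, List.mem_singleton] at hR
      subst hR; exact le_rfl
    · intro v hv
      exact ⟨P, by simp, hv⟩
    · intro g hg
      exact Or.inl ⟨P, by simp, hg⟩
    · intro g
      by_cases hgP : g ∈ P.1.edgeSet
      · exact ⟨P.1.deleteEdges {g}, P.1.deleteEdges {g}, by simp,
          P.2.2.1.2 g hgP, P.2.2.1.2 g hgP,
          by rw [SimpleGraph.Subgraph.deleteEdges_verts],
          by rw [SimpleGraph.Subgraph.deleteEdges_verts]⟩
      · have hdel : P.1.deleteEdges {g} = P.1 := deleteEdges_single hgP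
        exact ⟨P.1, P.1, by rw [hdel]; simp, P.2.2.1.1, P.2.2.1.1, subset_rfl, subset_rfl⟩
  | cons h q' ih =>
    rename_i P R' Q
    intro hq
    rw [SimpleGraph.Walk.cons_isPath_iff] at hq
    obtain ⟨hq', hPnot⟩ := hq
    obtain ⟨K', hK'C, hK'conn, hK'supp, hK'verts, hK'edges, hK'rob⟩ := ih hq'
    obtain ⟨hne, a, b, ha, hb, hab⟩ := id h
    have hR'K' : R'.1 ≤ K' := hK'supp R' q'.start_mem_support
    have hbK' : b ∈ K'.verts := hR'K'.1 hb
    have haE : a ∈ (G.subgraphOfAdj (C.adj_sub hab)).verts := by simp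
    have hbE : b ∈ (G.subgraphOfAdj (C.adj_sub hab)).verts := by simp
    have hEedge : (G.subgraphOfAdj (C.adj_sub hab)).edgeSet = {s(a, b)} :=
      SimpleGraph.edgeSet_subgraphOfAdj _
    have hEle : G.subgraphOfAdj (C.adj_sub hab) ≤ C := edgeSub_le hab
    have hPconn : P.1.Connected := P.2.2.1.1
    have hEconn : (G.subgraphOfAdj (C.adj_sub hab)).Connected :=
      SimpleGraph.Subgraph.subgraphOfAdj_connected _
    have hPE : (P.1 ⊔ G.subgraphOfAdj (C.adj_sub hab)).Connected :=
      hPconn.sup hEconn ⟨a, ha, haE⟩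
    have hgnotK' : ∀ (g' : Sym2 V) (u w : V), g' = s(u, w) → u ∈ P.1.verts →
        g' ∉ K'.edgeSet := by
      intro g' u w hg hu hgK'
      rcases hK'edges g' hgK' with ⟨R, hRs, hgR⟩ | ⟨d, hd, u', w', hguw, hu', hw'⟩
      · have huR : u ∈ R.1.verts := by
          rw [hg] at hgR
          exact R.1.edge_vert (SimpleGraph.Subgraph.mem_edgeSet.1 hgR)
        exact hPnot (by rw [blk_eq hu huR]; exact hRs)
      · rw [hg] at hguw
        rcases Sym2.eq_iff.1 hguw with ⟨rfl, rfl⟩ | ⟨rfl, rfl⟩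
        · refine hPnot ?_
          rw [blk_eq hu hu']
          exact SimpleGraph.Walk.dart_fst_mem_support_of_mem_darts _ hd
        · refine hPnot ?_
          rw [blk_eq hu hw']
          exact SimpleGraph.Walk.dart_snd_mem_support_of_mem_darts _ hd
    refine ⟨(P.1 ⊔ G.subgraphOfAdj (C.adj_sub hab)) ⊔ K',
      sup_le (sup_le P.2.1 hEle) hK'C,
      hPE.sup hK'conn ⟨b, Or.inr hbE, hbK'⟩, ?_, ?_, ?_, ?_⟩
    · intro R hR
      rw [SimpleGraph.Walk.support_cons, List.mem_cons] at hR
      rcases hR with rfl | hR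
      · exact (le_sup_left : R.1 ≤ R.1 ⊔ _).trans le_sup_left
      · exact (hK'supp R hR).trans le_sup_right
    · intro v hv
      simp only [SimpleGraph.Subgraph.verts_sup, Set.mem_union] at hv
      rcases hv with (hv | hv) | hv
      · exact ⟨P, by simp, hv⟩
      · simp only [SimpleGraph.subgraphOfAdj_verts, Set.mem_insert_iff,
          Set.mem_singleton_iff] at hv
        rcases hv with rfl | rfl
        · exact ⟨P, by simp, ha⟩
        · exact ⟨R', by simp, hb⟩
      · obtain ⟨R, hRs, hvR⟩ := hK'verts v hv
        exact ⟨R, by simp [hRs], hvR⟩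
    · intro g hg
      rw [SimpleGraph.Subgraph.edgeSet_sup, SimpleGraph.Subgraph.edgeSet_sup] at hg
      simp only [Set.mem_union] at hg
      rcases hg with (hg | hg) | hg
      · exact Or.inl ⟨P, by simp, hg⟩
      · right
        rw [hEedge, Set.mem_singleton_iff] at hg
        refine ⟨⟨(P, R'), h⟩, ?_, a, b, hg, ha, hb⟩
        rw [SimpleGraph.Walk.darts_cons]
        exact List.mem_cons_self
      · rcases hK'edges g hg with ⟨R, hRs, hgR⟩ | ⟨d, hd, u, w, hguw, hu, hw⟩
        · exact Or.inl ⟨R, by simp [hRs], hgR⟩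
        · refine Or.inr ⟨d, ?_, u, w, hguw, hu, hw⟩
          rw [SimpleGraph.Walk.darts_cons]
          exact List.mem_cons_of_mem _ hd
    · intro g
      induction g using Sym2.ind with
      | _ gx gy =>
      by_cases hge : s(gx, gy) = s(a, b)
      · rw [hge]
        have hgP : s(a, b) ∉ P.1.edgeSet := by
          intro hmem
          exact hne (blk_eq (P.1.edge_vert (SimpleGraph.Subgraph.mem_edgeSet.1 hmem).symm) hb)
        have hgK' : s(a, b) ∉ K'.edgeSet := hgnotK' _ a b rfl ha
        have hEq : ((P.1 ⊔ G.subgraphOfAdj (C.adj_sub hab)) ⊔ K').deleteEdges {s(a, b)}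
            = P.1 ⊔ K' := by
          rw [deleteEdges_sup, deleteEdges_sup,
            deleteEdges_single hgP,
            deleteEdges_single hgK']
          apply le_antisymm
          · refine sup_le (sup_le le_sup_left ?_) le_sup_right
            constructor
            · intro v hv
              rw [SimpleGraph.Subgraph.deleteEdges_verts] at hv
              simp only [SimpleGraph.subgraphOfAdj_verts, Set.mem_insert_iff,
                Set.mem_singleton_iff] at hv
              rcases hv with rfl | rfl
              · exact Or.inl ha
              · exact Or.inr hbK'
            · intro v w hvw
              rw [SimpleGraph.Subgraph.deleteEdges_adj] at hvw
              exfalso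
              obtain ⟨h1, h2⟩ := hvw
              simp only [SimpleGraph.subgraphOfAdj_adj] at h1
              exact h2 (by rw [Set.mem_singleton_iff, ← h1])
          · exact sup_le ((le_sup_left : P.1 ≤ P.1 ⊔ _).trans le_sup_left) le_sup_right
        exact ⟨P.1, K', hEq, hPconn, hK'conn, subset_rfl, (hK'supp Q q'.end_mem_support).1⟩
      · have hgE : s(gx, gy) ∉ (G.subgraphOfAdj (C.adj_sub hab)).edgeSet := by
          rw [hEedge]; simpa using hge
        have hEdel : (G.subgraphOfAdj (C.adj_sub hab)).deleteEdges {s(gx, gy)}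
            = G.subgraphOfAdj (C.adj_sub hab) := deleteEdges_single hgE
        by_cases hgP : s(gx, gy) ∈ P.1.edgeSet
        · have hPdel := P.2.2.1.2 _ hgP
          have hgK' : s(gx, gy) ∉ K'.edgeSet :=
            hgnotK' _ gx gy rfl (P.1.edge_vert (SimpleGraph.Subgraph.mem_edgeSet.1 hgP))
          have hEq : ((P.1 ⊔ G.subgraphOfAdj (C.adj_sub hab)) ⊔ K').deleteEdges {s(gx, gy)}
              = (P.1.deleteEdges {s(gx, gy)} ⊔ G.subgraphOfAdj (C.adj_sub hab)) ⊔ K' := by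
            rw [deleteEdges_sup, deleteEdges_sup, hEdel,
              deleteEdges_single hgK']
          have hconn : ((P.1.deleteEdges {s(gx, gy)} ⊔ G.subgraphOfAdj (C.adj_sub hab))
              ⊔ K').Connected :=
            (hPdel.sup hEconn ⟨a, ha, haE⟩).sup hK'conn ⟨b, Or.inr hbE, hbK'⟩
          refine ⟨_, _, by rw [hEq]; simp, hconn, hconn, ?_, ?_⟩
          · intro v hv
            exact Or.inl (Or.inl hv)
          · intro v hv
            exact Or.inr ((hK'supp Q q'.end_mem_support).1 hv)
        · obtain ⟨K₁', K₂', hsplit, hc1, hc2, hsub1, hsub2⟩ := hK'rob (s(gx, gy))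
          have hEq : ((P.1 ⊔ G.subgraphOfAdj (C.adj_sub hab)) ⊔ K').deleteEdges {s(gx, gy)}
              = ((P.1 ⊔ G.subgraphOfAdj (C.adj_sub hab)) ⊔ K₁') ⊔ K₂' := by
            rw [deleteEdges_sup, deleteEdges_sup, hEdel,
              deleteEdges_single hgP, hsplit, ← sup_assoc]
          exact ⟨(P.1 ⊔ G.subgraphOfAdj (C.adj_sub hab)) ⊔ K₁', K₂', hEq,
            hPE.sup hc1 ⟨b, Or.inr hbE, hsub1 hb⟩, hc2,
            fun v hv => Or.inl (Or.inl hv), hsub2⟩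

end ECSS

namespace ECSS

variable {V : Type*} [Fintype V] [DecidableEq V] {G : SimpleGraph V} {C : G.Subgraph}

lemma block_nonempty {B : G.Subgraph} (hB : IsBlock C B) : B.verts.Nonempty :=
  hB.2.1.1.nonempty

lemma bg_preconnected (hC : C.Connected) : (BG C).Preconnected := by
  have key : ∀ {u v : C.verts} (_ : C.coe.Walk u v) (A B : {B : G.Subgraph // IsBlock C B}),
      u.1 ∈ A.1.verts → v.1 ∈ B.1.verts → (BG C).Reachable A B := by
    intro u v w
    induction w with
    | nil =>
      intro A B hu hv
      rw [blk_eq hu hv]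
    | cons hadj w' ihw =>
      rename_i x y z
      intro A B hu hv
      obtain ⟨A', hA', hyA'⟩ := exists_block_mem y.2
      have hAA' : (BG C).Reachable A ⟨A', hA'⟩ := by
        by_cases hEq : A = ⟨A', hA'⟩
        · rw [hEq]
        · exact SimpleGraph.Adj.reachable ⟨hEq, x.1, y.1, hu, hyA', hadj⟩
      exact hAA'.trans (ihw ⟨A', hA'⟩ B hyA' hv)
  intro A B
  obtain ⟨a, ha⟩ := block_nonempty A.2
  obtain ⟨b, hb⟩ := block_nonempty B.2
  have haC : a ∈ C.verts := A.2.1.1 ha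
  have hbC : b ∈ C.verts := B.2.1.1 hb
  obtain ⟨w⟩ := hC.preconnected ⟨a, haC⟩ ⟨b, hbC⟩
  exact key w A B ha hb

lemma bg_connected (hC : C.Connected) : (BG C).Connected := by
  obtain ⟨v, hv⟩ := hC.nonempty
  obtain ⟨B, hB, -⟩ := exists_block_mem hv
  have : Nonempty {B : G.Subgraph // IsBlock C B} := ⟨⟨B, hB⟩⟩
  exact ⟨bg_preconnected hC⟩

lemma exists_snd_of_ne {α : Type*} {Γ : SimpleGraph α} {x y : α} (w : Γ.Walk x y)
    (hxy : x ≠ y) : ∃ u, Γ.Adj x u ∧ u ∈ w.support.tail := by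
  cases w with
  | nil => exact absurd rfl hxy
  | cons h w' =>
    refine ⟨_, h, ?_⟩
    rw [SimpleGraph.Walk.support_cons]
    exact w'.start_mem_support

lemma path_avoids_leaf {α : Type*} [Finite α] {Γ : SimpleGraph α} {L x y : α}
    (hL : (Γ.neighborSet L).ncard ≤ 1) {p : Γ.Walk x y} (hp : p.IsPath)
    (hx : x ≠ L) (hy : y ≠ L) : L ∉ p.support := by
  intro hmem
  obtain ⟨u1, hu1adj, hu1mem⟩ :=
    exists_snd_of_ne (p.takeUntil L hmem).reverse (Ne.symm hx)
  obtain ⟨u2, hu2adj, hu2mem⟩ := exists_snd_of_ne (p.dropUntil L hmem) (Ne.symm hy)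
  have hu1supp : u1 ∈ (p.takeUntil L hmem).support := by
    have h1 := List.mem_of_mem_tail hu1mem
    rwa [SimpleGraph.Walk.support_reverse, List.mem_reverse] at h1
  have hnodup := hp.support_nodup
  rw [← p.take_spec hmem, SimpleGraph.Walk.support_append] at hnodup
  have hdisj := (List.nodup_append.1 hnodup).2.2
  have hne : u1 ≠ u2 := hdisj _ hu1supp _ hu2mem
  have : 1 < (Γ.neighborSet L).ncard :=
    (Set.one_lt_ncard (Set.toFinite _)).2 ⟨u1, hu1adj, u2, hu2adj, hne⟩
  omega

lemma tree_two_leaves {α : Type*} [Fintype α] {Γ : SimpleGraph α} (ht : Γ.IsTree)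
    (hcard : 2 ≤ Fintype.card α) :
    ∃ A B : α, A ≠ B ∧ (Γ.neighborSet A).ncard ≤ 1 ∧ (Γ.neighborSet B).ncard ≤ 1 := by
  classical
  letI : DecidableRel Γ.Adj := Classical.decRel _
  have hdegpos : ∀ v : α, 1 ≤ Γ.degree v := by
    intro v
    obtain ⟨w, hw⟩ := Fintype.exists_ne_of_one_lt_card (by omega) v
    obtain ⟨walk⟩ := ht.isConnected.preconnected v w
    rcases walk with _ | ⟨hadj, walk'⟩
    · exact absurd rfl hw.symm
    · exact (SimpleGraph.degree_pos_iff_exists_adj Γ v).2 ⟨_, hadj⟩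
  have hsum : ∑ v, Γ.degree v = 2 * (Fintype.card α - 1) := by
    rw [SimpleGraph.sum_degrees_eq_twice_card_edges]
    have := ht.card_edgeFinset
    omega
  set L := Finset.univ.filter (fun v => Γ.degree v ≤ 1) with hLdef
  have hL2 : 2 ≤ L.card := by
    by_contra hcon
    push_neg at hcon
    have h1 : L.card * 1 ≤ ∑ v ∈ L, Γ.degree v := by
      simpa using Finset.card_nsmul_le_sum L _ 1 (fun x _ => hdegpos x)
    have h2 : (Finset.univ \ L).card * 2 ≤ ∑ v ∈ Finset.univ \ L, Γ.degree v := by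
      have hh : ∀ x ∈ Finset.univ \ L, 2 ≤ Γ.degree x := by
        intro x hx
        rw [Finset.mem_sdiff, hLdef, Finset.mem_filter] at hx
        have h3 := hx.2
        push_neg at h3
        exact h3 (Finset.mem_univ x)
      simpa [smul_eq_mul] using Finset.card_nsmul_le_sum (Finset.univ \ L) _ 2 hh
    have hsplit : ∑ v ∈ Finset.univ \ L, Γ.degree v + ∑ v ∈ L, Γ.degree v
        = ∑ v, Γ.degree v :=
      Finset.sum_sdiff (Finset.subset_univ L)
    have hcardsplit : (Finset.univ \ L).card = Fintype.card α - L.card := by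
      rw [Finset.card_sdiff_of_subset (Finset.subset_univ L), Finset.card_univ]
    have hLle : L.card ≤ Fintype.card α := (Finset.card_le_card (Finset.subset_univ L)).trans
      (le_of_eq Finset.card_univ)
    omega
  obtain ⟨A, hA, B, hB, hAB⟩ := Finset.one_lt_card.1 (by omega : 1 < L.card)
  rw [hLdef, Finset.mem_filter] at hA hB
  have hconv : ∀ v : α, (Γ.neighborSet v).ncard = Γ.degree v := by
    intro v
    rw [← SimpleGraph.card_neighborSet_eq_degree, Set.ncard_eq_toFinset_card']
    exact Set.toFinset_card _
  refine ⟨A, B, hAB, ?_, ?_⟩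
  · rw [hconv]; exact hA.2
  · rw [hconv]; exact hB.2

lemma bg_acyclic (hC : C.Connected) : (BG C).IsAcyclic := by
  rw [SimpleGraph.isAcyclic_iff_forall_adj_isBridge]
  intro A B hAdj
  obtain ⟨hne, a, b, ha, hb, hab⟩ := id hAdj
  rw [SimpleGraph.isBridge_iff]
  intro hreach
  obtain ⟨w, hwe⟩ := SimpleGraph.reachable_delete_edges_iff_exists_walk.1 hreach
  have hqe : s(A, B) ∉ (w.toPath : (BG C).Walk A B).edges :=
    fun h => hwe (SimpleGraph.Walk.edges_toPath_subset w h)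
  obtain ⟨K, hKC, hKconn, hKsupp, hKverts, hKedges, hKrob⟩ :=
    chain_lemma (w.toPath : (BG C).Walk A B) w.toPath.2
  have hAK : A.1 ≤ K := hKsupp A (SimpleGraph.Walk.start_mem_support _)
  have hBK : B.1 ≤ K := hKsupp B (SimpleGraph.Walk.end_mem_support _)
  have haK : a ∈ K.verts := hAK.1 ha
  have hbK : b ∈ K.verts := hBK.1 hb
  have hsnotK : s(a, b) ∉ K.edgeSet := by
    intro hmem
    rcases hKedges _ hmem with ⟨R, hRs, hgR⟩ | ⟨d, hd, u, w', hguw, hu, hw'⟩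
    · have haR : a ∈ R.1.verts := R.1.edge_vert (SimpleGraph.Subgraph.mem_edgeSet.1 hgR)
      have hbR : b ∈ R.1.verts := R.1.edge_vert (SimpleGraph.Subgraph.mem_edgeSet.1 hgR).symm
      exact hne ((blk_eq ha haR).trans (blk_eq hbR hb))
    · have hedge : d.edge ∈ (w.toPath : (BG C).Walk A B).edges :=
        List.mem_map_of_mem (f := SimpleGraph.Dart.edge) hd
      have hedef : d.edge = s(d.fst, d.snd) := rfl
      rcases Sym2.eq_iff.1 hguw with ⟨ha', hb'⟩ | ⟨ha', hb'⟩
      · have hu2 : a ∈ d.fst.1.verts := by rw [ha']; exact hu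
        have hw2 : b ∈ d.snd.1.verts := by rw [hb']; exact hw'
        have h1 : d.fst = A := blk_eq hu2 ha
        have h2 : d.snd = B := blk_eq hw2 hb
        rw [hedef, h1, h2] at hedge
        exact hqe hedge
      · have hu2 : b ∈ d.fst.1.verts := by rw [hb']; exact hu
        have hw2 : a ∈ d.snd.1.verts := by rw [ha']; exact hw'
        have h1 : d.fst = B := blk_eq hu2 hb
        have h2 : d.snd = A := blk_eq hw2 ha
        rw [hedef, h1, h2, Sym2.eq_swap] at hedge
        exact hqe hedge
  have hEconn := SimpleGraph.Subgraph.subgraphOfAdj_connected (C.adj_sub hab)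
  have h2EC : SubTwoEC (K ⊔ G.subgraphOfAdj (C.adj_sub hab)) := by
    refine ⟨hKconn.sup hEconn ⟨a, haK, by simp⟩, ?_⟩
    intro g _
    by_cases hge : g = s(a, b)
    · subst hge
      have heq : (K ⊔ G.subgraphOfAdj (C.adj_sub hab)).deleteEdges {s(a, b)} = K := by
        rw [deleteEdges_sup, deleteEdges_single hsnotK]
        apply le_antisymm
        · refine sup_le le_rfl ?_
          constructor
          · intro v hv
            rw [SimpleGraph.Subgraph.deleteEdges_verts] at hv
            simp only [SimpleGraph.subgraphOfAdj_verts, Set.mem_insert_iff,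
              Set.mem_singleton_iff] at hv
            rcases hv with rfl | rfl
            · exact haK
            · exact hbK
          · intro v w' hvw
            rw [SimpleGraph.Subgraph.deleteEdges_adj] at hvw
            exfalso
            obtain ⟨h1, h2⟩ := hvw
            simp only [SimpleGraph.subgraphOfAdj_adj] at h1
            exact h2 (by rw [Set.mem_singleton_iff, ← h1])
        · exact le_sup_left
      rw [heq]
      exact hKconn
    · obtain ⟨K₁, K₂, hsplit, hc1, hc2, hsubA, hsubB⟩ := hKrob g
      have hEdel : (G.subgraphOfAdj (C.adj_sub hab)).deleteEdges {g}
          = G.subgraphOfAdj (C.adj_sub hab) := deleteEdges_single (by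
        rw [SimpleGraph.edgeSet_subgraphOfAdj]
        simpa using hge)
      have heq : (K ⊔ G.subgraphOfAdj (C.adj_sub hab)).deleteEdges {g}
          = (K₁ ⊔ G.subgraphOfAdj (C.adj_sub hab)) ⊔ K₂ := by
        rw [deleteEdges_sup, hEdel, hsplit, sup_right_comm]
      rw [heq]
      exact (hc1.sup hEconn ⟨a, hsubA ha, by simp⟩).sup hc2
        ⟨b, Or.inr (by simp), hsubB hb⟩
  have hfinal := A.2.2.2 (K ⊔ G.subgraphOfAdj (C.adj_sub hab)) (hAK.trans le_sup_left)
    (sup_le hKC (edgeSub_le hab)) h2EC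
  have hbA : b ∈ A.1.verts := by
    rw [← hfinal]
    exact Or.inl hbK
  exact hne (blk_eq hbA hb)

lemma bg_isTree (hC : C.Connected) : (BG C).IsTree :=
  ⟨bg_connected hC, bg_acyclic hC⟩

lemma leaf_pendant (hC : C.Connected) {L : {B : G.Subgraph // IsBlock C B}}
    (hL : ((BG C).neighborSet L).ncard ≤ 1)
    (hex : ∃ B' : {B : G.Subgraph // IsBlock C B}, B' ≠ L) :
    IsPendant C L.1 := by
  obtain ⟨B', hB'L⟩ := hex
  obtain ⟨z, hz⟩ := block_nonempty B'.2
  have hzL : z ∉ L.1.verts := fun h => hB'L (blk_eq hz h)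
  rw [IsPendant, SimpleGraph.Subgraph.connected_iff]
  refine ⟨?_, ⟨z, B'.2.1.1 hz, hzL⟩⟩
  rw [SimpleGraph.Subgraph.preconnected_iff]
  rintro ⟨x, hxC, hxL⟩ ⟨y, hyC, hyL⟩
  obtain ⟨Bx, hBx, hxBx⟩ := exists_block_mem hxC
  obtain ⟨By, hBy, hyBy⟩ := exists_block_mem hyC
  have hBxL : (⟨Bx, hBx⟩ : {B : G.Subgraph // IsBlock C B}) ≠ L :=
    fun h => hxL (by rw [show L.1 = Bx from congrArg Subtype.val h.symm]; exact hxBx)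
  have hByL : (⟨By, hBy⟩ : {B : G.Subgraph // IsBlock C B}) ≠ L :=
    fun h => hyL (by rw [show L.1 = By from congrArg Subtype.val h.symm]; exact hyBy)
  obtain ⟨w⟩ := bg_preconnected hC ⟨Bx, hBx⟩ ⟨By, hBy⟩
  have hLp : L ∉ (w.toPath : (BG C).Walk _ _).support :=
    path_avoids_leaf hL w.toPath.2 hBxL hByL
  obtain ⟨K, hKC, hKconn, hKsupp, hKverts, hKedges, hKrob⟩ :=
    chain_lemma _ w.toPath.2
  have hKv : ∀ v ∈ K.verts, v ∈ C.verts ∧ v ∉ L.1.verts := by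
    intro v hv
    obtain ⟨R, hRs, hvR⟩ := hKverts v hv
    refine ⟨hKC.1 hv, fun hvL => ?_⟩
    exact hLp (blk_eq hvR hvL ▸ hRs)
  have hKle : K ≤ C.deleteVerts L.1.verts := by
    constructor
    · intro v hv
      exact ⟨(hKv v hv).1, (hKv v hv).2⟩
    · intro u v' huv
      rw [SimpleGraph.Subgraph.deleteVerts_adj]
      have h1 := hKv u (K.edge_vert huv)
      have h2 := hKv v' (K.edge_vert huv.symm)
      exact ⟨h1.1, h1.2, h2.1, h2.2, hKC.2 huv⟩
  have hxK : x ∈ K.verts :=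
    (hKsupp ⟨Bx, hBx⟩ (SimpleGraph.Walk.start_mem_support _)).1 hxBx
  have hyK : y ∈ K.verts :=
    (hKsupp ⟨By, hBy⟩ (SimpleGraph.Walk.end_mem_support _)).1 hyBy
  exact reachable_coe_of_le hKle hKconn hxK hyK

lemma two_pendant (hC : C.Connected) (hbr : HasBridge C) :
    ∃ B1 B2 : G.Subgraph, IsBlock C B1 ∧ IsBlock C B2 ∧ B1 ≠ B2 ∧
      IsPendant C B1 ∧ IsPendant C B2 := by
  obtain ⟨e, he⟩ := hbr
  revert he
  induction e using Sym2.ind with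
  | _ a b =>
  intro he
  have haC : a ∈ C.verts := C.edge_vert (SimpleGraph.Subgraph.mem_edgeSet.1 he.1)
  have hbC : b ∈ C.verts := C.edge_vert (SimpleGraph.Subgraph.mem_edgeSet.1 he.1).symm
  obtain ⟨Ba, hBa, haBa⟩ := exists_block_mem haC
  obtain ⟨Bb, hBb, hbBb⟩ := exists_block_mem hbC
  have hne : Ba ≠ Bb := bridge_blocks_ne he hBa hBb haBa hbBb
  have : Fintype {B : G.Subgraph // IsBlock C B} := Fintype.ofFinite _
  have hcard : 2 ≤ Fintype.card {B : G.Subgraph // IsBlock C B} :=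
    Fintype.one_lt_card_iff.2 ⟨⟨Ba, hBa⟩, ⟨Bb, hBb⟩, fun h => hne (congrArg Subtype.val h)⟩
  obtain ⟨L1, L2, hL12, h1, h2⟩ := tree_two_leaves (bg_isTree hC) hcard
  exact ⟨L1.1, L2.1, L1.2, L2.2, fun h => hL12 (Subtype.ext h),
    leaf_pendant hC h1 ⟨L2, hL12.symm⟩, leaf_pendant hC h2 ⟨L1, hL12⟩⟩

end ECSS

namespace ECSS

variable {V : Type*} [Fintype V] [DecidableEq V] {G : SimpleGraph V}

lemma complex_count {H C : G.Subgraph} (hH : IsComponent H C) (hcan : IsCanonical H)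
    (hbr : HasBridge C) :
    4 + 4 * {B : G.Subgraph | IsBlock C B}.ncard + {e : Sym2 V | IsBridgeIn C e}.ncard
      ≤ C.edgeSet.ncard := by
  classical
  have hC : C.Connected := hH.2.1
  obtain ⟨B1, B2, hB1, hB2, hB12, hP1, hP2⟩ := two_pendant hC hbr
  have hblk := hcan.2 C hH hbr
  have h6B1 : 6 ≤ B1.edgeSet.ncard := (hblk B1 hB1).1 hP1
  have h6B2 : 6 ≤ B2.edgeSet.ncard := (hblk B2 hB2).1 hP2
  have h4 : ∀ B : G.Subgraph, IsBlock C B → 4 ≤ B.edgeSet.ncard := by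
    intro B hB
    by_cases hp : IsPendant C B
    · have := (hblk B hB).1 hp; omega
    · exact (hblk B hB).2 hp
  set 𝔅 : Finset G.Subgraph := (Set.toFinite {B : G.Subgraph | IsBlock C B}).toFinset
    with h𝔅
  have hmem𝔅 : ∀ B : G.Subgraph, B ∈ 𝔅 ↔ IsBlock C B := by
    intro B; rw [h𝔅, Set.Finite.mem_toFinset]; rfl
  set f : G.Subgraph → Finset (Sym2 V) := fun B => (Set.toFinite B.edgeSet).toFinset
    with hf
  have hfcard : ∀ B : G.Subgraph, (f B).card = B.edgeSet.ncard := by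
    intro B; rw [hf]; exact (Set.ncard_eq_toFinset_card _ _).symm
  -- pairwise disjointness of block edge sets
  have hdisj : ∀ B ∈ 𝔅, ∀ B' ∈ 𝔅, B ≠ B' → Disjoint (f B) (f B') := by
    intro B hB B' hB' hne
    rw [Finset.disjoint_left]
    intro e he he'
    rw [hf, Set.Finite.mem_toFinset] at he he'
    apply hne
    induction e using Sym2.ind with
    | _ x y =>
      exact block_eq_block ((hmem𝔅 B).1 hB) ((hmem𝔅 B').1 hB')
        (B.edge_vert (SimpleGraph.Subgraph.mem_edgeSet.1 he))
        (B'.edge_vert (SimpleGraph.Subgraph.mem_edgeSet.1 he'))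
  have hcardbi : (𝔅.biUnion f).card = ∑ B ∈ 𝔅, (f B).card := Finset.card_biUnion hdisj
  -- the bridges, as a finset
  set R : Finset (Sym2 V) := (Set.toFinite {e : Sym2 V | IsBridgeIn C e}).toFinset with hR
  have hRcard : R.card = {e : Sym2 V | IsBridgeIn C e}.ncard :=
    (Set.ncard_eq_toFinset_card _ _).symm
  set T : Finset (Sym2 V) := (Set.toFinite C.edgeSet).toFinset with hT
  have hTcard : T.card = C.edgeSet.ncard := (Set.ncard_eq_toFinset_card _ _).symm
  have hRT : R ⊆ T := by
    intro e he
    rw [hR, Set.Finite.mem_toFinset] at he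
    rw [hT, Set.Finite.mem_toFinset]
    exact he.1
  have hsub : 𝔅.biUnion f ⊆ T \ R := by
    intro e he
    rw [Finset.mem_biUnion] at he
    obtain ⟨B, hB, heB⟩ := he
    rw [hf, Set.Finite.mem_toFinset] at heB
    rw [Finset.mem_sdiff]
    constructor
    · rw [hT, Set.Finite.mem_toFinset]
      exact SimpleGraph.Subgraph.edgeSet_mono ((hmem𝔅 B).1 hB).1 heB
    · rw [hR, Set.Finite.mem_toFinset]
      exact fun hbr' => bridge_not_mem_block ((hmem𝔅 B).1 hB) hbr' heB
  have hineq1 : ∑ B ∈ 𝔅, (f B).card ≤ T.card - R.card := by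
    rw [← hcardbi, ← Finset.card_sdiff_of_subset hRT]
    exact Finset.card_le_card hsub
  -- lower bound on the sum
  have hB1mem : B1 ∈ 𝔅 := (hmem𝔅 B1).2 hB1
  have hB2mem : B2 ∈ 𝔅.erase B1 := Finset.mem_erase.2 ⟨hB12.symm, (hmem𝔅 B2).2 hB2⟩
  have hsum1 : (f B1).card + ∑ B ∈ 𝔅.erase B1, (f B).card = ∑ B ∈ 𝔅, (f B).card :=
    Finset.add_sum_erase 𝔅 (fun B => (f B).card) hB1mem
  have hsum2 : (f B2).card + ∑ B ∈ (𝔅.erase B1).erase B2, (f B).card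
      = ∑ B ∈ 𝔅.erase B1, (f B).card :=
    Finset.add_sum_erase (𝔅.erase B1) (fun B => (f B).card) hB2mem
  have hrest : ((𝔅.erase B1).erase B2).card * 4
      ≤ ∑ B ∈ (𝔅.erase B1).erase B2, (f B).card := by
    have hh : ∀ B ∈ (𝔅.erase B1).erase B2, 4 ≤ (f B).card := by
      intro B hB
      rw [hfcard]
      exact h4 B ((hmem𝔅 B).1 (Finset.mem_of_mem_erase (Finset.mem_of_mem_erase hB)))
    simpa [smul_eq_mul] using Finset.card_nsmul_le_sum ((𝔅.erase B1).erase B2) _ 4 hh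
  have hc1 : (𝔅.erase B1).card = 𝔅.card - 1 := Finset.card_erase_of_mem hB1mem
  have hc2 : ((𝔅.erase B1).erase B2).card = (𝔅.erase B1).card - 1 :=
    Finset.card_erase_of_mem hB2mem
  have hbcard : 𝔅.card = {B : G.Subgraph | IsBlock C B}.ncard :=
    (Set.ncard_eq_toFinset_card _ _).symm
  have h2card : 2 ≤ 𝔅.card := by
    have : ({B1, B2} : Finset G.Subgraph) ⊆ 𝔅 := by
      intro x hx
      rcases Finset.mem_insert.1 hx with rfl | hx
      · exact hB1mem
      · rw [Finset.mem_singleton.1 hx]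
        exact (hmem𝔅 B2).2 hB2
    calc 2 = ({B1, B2} : Finset G.Subgraph).card := by
            rw [Finset.card_insert_of_notMem (by simpa using hB12), Finset.card_singleton]
         _ ≤ 𝔅.card := Finset.card_le_card this
  have hf1 : (f B1).card = B1.edgeSet.ncard := hfcard B1
  have hf2 : (f B2).card = B2.edgeSet.ncard := hfcard B2
  have hRTcard : R.card ≤ T.card := Finset.card_le_card hRT
  omega

end ECSS

namespace ECSS

variable {V : Type*} [Fintype V] [DecidableEq V] {G : SimpleGraph V}

lemma componentCredit_le {H C : G.Subgraph} (hH : IsComponent H C) (hcan : IsCanonical H) :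
    componentCredit C ≤ (C.edgeSet.ncard : ℚ) / 4 := by
  by_cases hbr : HasBridge C
  · rw [componentCredit, if_pos hbr]
    have hnat := complex_count hH hcan hbr
    have hcast : (4 : ℚ) + 4 * ({B : G.Subgraph | IsBlock C B}.ncard : ℚ)
        + ({e : Sym2 V | IsBridgeIn C e}.ncard : ℚ) ≤ (C.edgeSet.ncard : ℚ) := by
      exact_mod_cast hnat
    linarith
  · rw [componentCredit, if_neg hbr]
    by_cases h8 : 8 ≤ C.edgeSet.ncard
    · rw [if_pos h8]
      have : (8 : ℚ) ≤ (C.edgeSet.ncard : ℚ) := by exact_mod_cast h8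
      linarith
    · rw [if_neg h8]

lemma component_eq_component {H C1 C2 : G.Subgraph} (h1 : IsComponent H C1)
    (h2 : IsComponent H C2) {v : V} (hv1 : v ∈ C1.verts) (hv2 : v ∈ C2.verts) :
    C1 = C2 := by
  have hsup := h1.2.1.sup h2.2.1 ⟨v, hv1, hv2⟩
  exact (h1.2.2 (C1 ⊔ C2) le_sup_left (sup_le h1.1 h2.1) hsup).symm.trans
    (h2.2.2 (C1 ⊔ C2) le_sup_right (sup_le h1.1 h2.1) hsup)

lemma sum_component_edges_le (H : G.Subgraph) :
    ∑ C ∈ (Set.toFinite {C : G.Subgraph | IsComponent H C}).toFinset, C.edgeSet.ncard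
      ≤ H.edgeSet.ncard := by
  classical
  set F : Finset G.Subgraph := (Set.toFinite {C : G.Subgraph | IsComponent H C}).toFinset
    with hF
  have hmemF : ∀ C : G.Subgraph, C ∈ F ↔ IsComponent H C := by
    intro C; rw [hF, Set.Finite.mem_toFinset]; rfl
  set f : G.Subgraph → Finset (Sym2 V) := fun C => (Set.toFinite C.edgeSet).toFinset
    with hf
  have hfcard : ∀ C : G.Subgraph, (f C).card = C.edgeSet.ncard := by
    intro C; rw [hf]; exact (Set.ncard_eq_toFinset_card _ _).symm
  have hdisj : ∀ C ∈ F, ∀ C' ∈ F, C ≠ C' → Disjoint (f C) (f C') := by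
    intro C hC C' hC' hne
    rw [Finset.disjoint_left]
    intro e he he'
    rw [hf, Set.Finite.mem_toFinset] at he he'
    apply hne
    induction e using Sym2.ind with
    | _ x y =>
      exact component_eq_component ((hmemF C).1 hC) ((hmemF C').1 hC')
        (C.edge_vert (SimpleGraph.Subgraph.mem_edgeSet.1 he))
        (C'.edge_vert (SimpleGraph.Subgraph.mem_edgeSet.1 he'))
  have hcardbi : (F.biUnion f).card = ∑ C ∈ F, (f C).card := Finset.card_biUnion hdisj
  have hsub : F.biUnion f ⊆ (Set.toFinite H.edgeSet).toFinset := by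
    intro e he
    rw [Finset.mem_biUnion] at he
    obtain ⟨C, hC, heC⟩ := he
    rw [hf, Set.Finite.mem_toFinset] at heC
    rw [Set.Finite.mem_toFinset]
    exact SimpleGraph.Subgraph.edgeSet_mono ((hmemF C).1 hC).1 heC
  calc ∑ C ∈ F, C.edgeSet.ncard = ∑ C ∈ F, (f C).card :=
        Finset.sum_congr rfl (fun C _ => (hfcard C).symm)
    _ = (F.biUnion f).card := hcardbi.symm
    _ ≤ ((Set.toFinite H.edgeSet).toFinset).card := Finset.card_le_card hsub
    _ = H.edgeSet.ncard := (Set.ncard_eq_toFinset_card _ _).symm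

end ECSS


/-- Let `H` be a canonical 2-edge cover of a graph `G`.
Then `cost(H) ≤ (5/4)·|E(H)|`. -/
theorem statement_4 {V : Type*} [Fintype V] [DecidableEq V] {G : SimpleGraph V}
    (H : G.Subgraph) (hcov : ECSS.IsTwoEdgeCover H) (hcan : ECSS.IsCanonical H) :
    ECSS.cost H ≤ 5 / 4 * (H.edgeSet.ncard : ℚ) := by
  classical
  have hfin : {C : G.Subgraph | ECSS.IsComponent H C}.Finite := Set.toFinite _
  have hcredit : ECSS.credit H ≤ (H.edgeSet.ncard : ℚ) / 4 := by
    have hrw : ECSS.credit H = ∑ C ∈ hfin.toFinset, ECSS.componentCredit C :=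
      finsum_mem_eq_finite_toFinset_sum _ hfin
    rw [hrw]
    have hstep : ∑ C ∈ hfin.toFinset, ECSS.componentCredit C
        ≤ ∑ C ∈ hfin.toFinset, (C.edgeSet.ncard : ℚ) / 4 :=
      Finset.sum_le_sum fun C hC =>
        ECSS.componentCredit_le (hfin.mem_toFinset.1 hC) hcan
    have hnat : ∑ C ∈ hfin.toFinset, C.edgeSet.ncard ≤ H.edgeSet.ncard :=
      ECSS.sum_component_edges_le H
    have hcast : ∑ C ∈ hfin.toFinset, (C.edgeSet.ncard : ℚ) ≤ (H.edgeSet.ncard : ℚ) := by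
      exact_mod_cast hnat
    have hdiv : ∑ C ∈ hfin.toFinset, (C.edgeSet.ncard : ℚ) / 4
        = (∑ C ∈ hfin.toFinset, (C.edgeSet.ncard : ℚ)) / 4 := by
      rw [Finset.sum_div]
    linarith
  have hcost : ECSS.cost H = (H.edgeSet.ncard : ℚ) + ECSS.credit H := rfl
  linarith
end

section
/- Let G be a graph, {u,v,w} a large 3-vertex cut of G, and (V1, V2) a partition of V(G) ∖ {u,v,w} with 7 ≤ |V1| ≤ |V2| and no edges of G between V1 and V2. Let G_1 = G[V1 ∪ {u,v,w}] and G_2 = G[V2 ∪ {u,v,w}] minus the edges uv, vw, uw. Let H ⊆ E(G) be connected and spanning in G, and let H_i = H ∩ E(G_i) for i ∈ {1,2}. If for all i ∈ {1,2} every edge e ∈ H_i is part of a 2-edge-connected component of H_i or lies on an x–y path in H_i for some distinct x, y ∈ {u,v,w} such that there also exists an x–y path in H_j (where j is the other index), then H is a 2-edge-connected spanning subgraph of G. -/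
open SimpleGraph

open scoped Classical

section Auxiliary

variable {V : Type*}

/-- If the endpoints of `s(a, b)` are reachable after deleting that edge, then every
pair of vertices reachable in `Γ` stays reachable after deleting `s(a, b)`. -/
private lemma ecss_walk_reach {Γ : SimpleGraph V} {a b : V}
    (hab : (Γ.deleteEdges {s(a, b)}).Reachable a b) :
    ∀ {x y : V}, Γ.Reachable x y → (Γ.deleteEdges {s(a, b)}).Reachable x y := by
  intro x y hxy
  obtain ⟨p⟩ := hxy
  induction p with
  | nil => exact SimpleGraph.Reachable.refl _
  | @cons x' c y' h q ih =>
    refine SimpleGraph.Reachable.trans ?_ ih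
    by_cases he : s(x', c) = s(a, b)
    · rcases Sym2.eq_iff.mp he with ⟨rfl, rfl⟩ | ⟨rfl, rfl⟩
      · exact hab
      · exact hab.symm
    · exact SimpleGraph.Adj.reachable
        (by rw [SimpleGraph.deleteEdges_adj]; exact ⟨h, by simpa using he⟩)

/-- Splitting a trail at an edge it contains: the starting endpoint reaches one end
of the edge and the other end reaches the finish, all avoiding the edge. -/
private lemma ecss_trail_split {Γ : SimpleGraph V} {a b : V} :
    ∀ {x y : V} (p : Γ.Walk x y), p.IsTrail → s(a, b) ∈ p.edges →
      ((Γ.deleteEdges {s(a, b)}).Reachable x a ∧ (Γ.deleteEdges {s(a, b)}).Reachable b y) ∨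
      ((Γ.deleteEdges {s(a, b)}).Reachable x b ∧ (Γ.deleteEdges {s(a, b)}).Reachable a y) := by
  intro x y p
  induction p with
  | nil => intro _ h; simp at h
  | @cons x' c y' h q ih =>
    intro ht he
    by_cases hfst : s(x', c) = s(a, b)
    · have hq : s(a, b) ∉ q.edges := by
        have hnd := ht.edges_nodup
        rw [SimpleGraph.Walk.edges_cons] at hnd
        rw [← hfst]
        exact (List.nodup_cons.mp hnd).1
      have hqr : (Γ.deleteEdges {s(a, b)}).Reachable c y' :=
        ⟨q.toDeleteEdges _ (fun e he' => by
          simp only [Set.mem_singleton_iff]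
          rintro rfl
          exact hq he')⟩
      rcases Sym2.eq_iff.mp hfst with ⟨rfl, rfl⟩ | ⟨rfl, rfl⟩
      · exact Or.inl ⟨SimpleGraph.Reachable.refl _, hqr⟩
      · exact Or.inr ⟨SimpleGraph.Reachable.refl _, hqr⟩
    · have he' : s(a, b) ∈ q.edges := by
        rw [SimpleGraph.Walk.edges_cons] at he
        rcases List.mem_cons.mp he with h1 | h1
        · exact absurd h1.symm hfst
        · exact h1
      have hadj : (Γ.deleteEdges {s(a, b)}).Adj x' c := by
        rw [SimpleGraph.deleteEdges_adj]; exact ⟨h, by simpa using hfst⟩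
      rcases ih ht.of_cons he' with ⟨h1, h2⟩ | ⟨h1, h2⟩
      · exact Or.inl ⟨hadj.reachable.trans h1, h2⟩
      · exact Or.inr ⟨hadj.reachable.trans h1, h2⟩

/-- Reachability in the spanning coercion transfers to the coercion, for spanning
subgraphs. -/
private lemma ecss_reach_coe {G : SimpleGraph V} {K : G.Subgraph}
    (hK : ∀ x, x ∈ K.verts) {x y : V} (h : K.spanningCoe.Reachable x y) :
    K.coe.Reachable ⟨x, hK x⟩ ⟨y, hK y⟩ := by
  obtain ⟨p⟩ := h
  induction p with
  | nil => exact SimpleGraph.Reachable.refl _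
  | @cons x' c y' h q ih =>
    exact SimpleGraph.Reachable.trans
      (SimpleGraph.Adj.reachable
        (show K.coe.Adj ⟨x', hK x'⟩ ⟨c, hK c⟩ by exact h)) ih

/-- Reachability in the coercion transfers to the spanning coercion. -/
private lemma ecss_coe_reach {G : SimpleGraph V} {K : G.Subgraph}
    {x y : K.verts} (h : K.coe.Reachable x y) : K.spanningCoe.Reachable x.1 y.1 :=
  h.map ⟨Subtype.val, fun hadj => hadj⟩

end Auxiliary

/-- Let `{u,v,w}` be a large 3-vertex cut of `G`, `(V1, V2)` a partition
of `V(G) ∖ {u,v,w}` with `7 ≤ |V1| ≤ |V2|` and no edges between `V1` and `V2`. Let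
`H ⊆ E(G)` be connected and spanning, `H_1 = H ∩ E(G[V1 ∪ {u,v,w}])` and
`H_2 = H ∩ E(G[V2 ∪ {u,v,w}] ∖ {uv, vw, uw})`. If for each `i` every edge of `H_i` is
in a 2-edge-connected component of `H_i` or lies on an `x`–`y` path in `H_i` for
distinct `x, y ∈ {u,v,w}` with an `x`–`y` path in the other side, then `H` is a
2-edge-connected spanning subgraph of `G`. -/
theorem statement_16 {V : Type*} [Fintype V] [DecidableEq V] (G : SimpleGraph V)
    (u v w : V) (hcut : ECSS.IsLarge3Cut G {u, v, w})
    (V1 V2 : Set V) (hunion : V1 ∪ V2 = ({u, v, w} : Set V)ᶜ) (hdisj : Disjoint V1 V2)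
    (h7 : 7 ≤ V1.ncard) (h12 : V1.ncard ≤ V2.ncard)
    (hnoedge : ∀ a ∈ V1, ∀ b ∈ V2, ¬ G.Adj a b)
    (H : G.Subgraph) (hsp : H.IsSpanning) (hconn : H.Connected)
    (hcond1 : ECSS.EdgeCond (H.induce (V1 ∪ {u, v, w}))
      ((H.induce (V2 ∪ {u, v, w})).deleteEdges {s(u, v), s(v, w), s(u, w)}) u v w)
    (hcond2 : ECSS.EdgeCond
      ((H.induce (V2 ∪ {u, v, w})).deleteEdges {s(u, v), s(v, w), s(u, w)})
      (H.induce (V1 ∪ {u, v, w})) u v w) :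
    ECSS.IsTwoECSS G H := by
  classical
  set H1 : G.Subgraph := H.induce (V1 ∪ {u, v, w}) with hH1
  set H2 : G.Subgraph :=
    (H.induce (V2 ∪ {u, v, w})).deleteEdges {s(u, v), s(v, w), s(u, w)} with hH2
  -- basic membership facts
  have hV1T : ∀ x ∈ V1, x ∉ ({u, v, w} : Set V) := by
    intro x hx
    have hx' : x ∈ V1 ∪ V2 := Or.inl hx
    rw [hunion] at hx'
    exact hx'
  have hV2T : ∀ x ∈ V2, x ∉ ({u, v, w} : Set V) := by
    intro x hx
    have hx' : x ∈ V1 ∪ V2 := Or.inr hx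
    rw [hunion] at hx'
    exact hx'
  have hcover : ∀ x : V, x ∈ V1 ∨ x ∈ V2 ∨ x ∈ ({u, v, w} : Set V) := by
    intro x
    by_cases hx : x ∈ ({u, v, w} : Set V)
    · exact Or.inr (Or.inr hx)
    · have hx' : x ∈ V1 ∪ V2 := by rw [hunion]; exact hx
      rcases hx' with h | h
      · exact Or.inl h
      · exact Or.inr (Or.inl h)
  -- edges of the two sides are edges of H
  have hle1 : ∀ ⦃c d : V⦄, H1.Adj c d → H.Adj c d := by
    intro c d h
    rw [hH1, SimpleGraph.Subgraph.induce_adj] at h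
    exact h.2.2
  have hle2 : ∀ ⦃c d : V⦄, H2.Adj c d → H.Adj c d := by
    intro c d h
    rw [hH2, SimpleGraph.Subgraph.deleteEdges_adj, SimpleGraph.Subgraph.induce_adj] at h
    exact h.1.2.2
  -- an edge with both endpoints in {u,v,w} is one of the three special edges
  have htriple : ∀ x y : V, x ∈ ({u, v, w} : Set V) → y ∈ ({u, v, w} : Set V) → x ≠ y →
      s(x, y) ∈ ({s(u, v), s(v, w), s(u, w)} : Set (Sym2 V)) := by
    intro x y hx hy hxy
    simp only [Set.mem_insert_iff, Set.mem_singleton_iff] at hx hy ⊢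
    rcases hx with rfl | rfl | rfl <;> rcases hy with rfl | rfl | rfl <;>
      first
        | exact absurd rfl hxy
        | exact Or.inl rfl
        | exact Or.inr (Or.inl rfl)
        | exact Or.inr (Or.inr rfl)
        | exact Or.inl Sym2.eq_swap
        | exact Or.inr (Or.inl Sym2.eq_swap)
        | exact Or.inr (Or.inr Sym2.eq_swap)
  have hmemT : ∀ x y : V, s(x, y) ∈ ({s(u, v), s(v, w), s(u, w)} : Set (Sym2 V)) →
      x ∈ ({u, v, w} : Set V) ∧ y ∈ ({u, v, w} : Set V) := by
    intro x y hxy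
    simp only [Set.mem_insert_iff, Set.mem_singleton_iff, Sym2.eq_iff] at hxy
    rcases hxy with (⟨rfl, rfl⟩ | ⟨rfl, rfl⟩) | (⟨rfl, rfl⟩ | ⟨rfl, rfl⟩) |
      (⟨rfl, rfl⟩ | ⟨rfl, rfl⟩) <;> simp [Set.mem_insert_iff]
  -- no edge lies in both sides
  have hnotboth : ∀ a b : V, H1.Adj a b → ¬ H2.Adj a b := by
    intro a b h1 h2
    rw [hH1, SimpleGraph.Subgraph.induce_adj] at h1
    rw [hH2, SimpleGraph.Subgraph.deleteEdges_adj, SimpleGraph.Subgraph.induce_adj] at h2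
    obtain ⟨ha1, hb1, hadj⟩ := h1
    obtain ⟨⟨ha2, hb2, -⟩, hne⟩ := h2
    have haT : a ∈ ({u, v, w} : Set V) := by
      rcases ha1 with h | h
      · rcases ha2 with h' | h'
        · exact absurd h' (Set.disjoint_left.mp hdisj h)
        · exact absurd h' (hV1T a h)
      · exact h
    have hbT : b ∈ ({u, v, w} : Set V) := by
      rcases hb1 with h | h
      · rcases hb2 with h' | h'
        · exact absurd h' (Set.disjoint_left.mp hdisj h)
        · exact absurd h' (hV1T b h)
      · exact h
    exact hne (htriple a b haT hbT (H.adj_sub hadj).ne)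
  -- every edge of H lies in one of the two sides
  have hclass : ∀ a b : V, H.Adj a b → H1.Adj a b ∨ H2.Adj a b := by
    intro a b hadj
    have hG : G.Adj a b := H.adj_sub hadj
    have mk1 : ∀ (ha : a ∈ V1 ∪ {u, v, w}) (hb : b ∈ V1 ∪ {u, v, w}), H1.Adj a b := by
      intro ha hb
      rw [hH1, SimpleGraph.Subgraph.induce_adj]
      exact ⟨ha, hb, hadj⟩
    have mk2 : ∀ (ha : a ∈ V2 ∪ {u, v, w}) (hb : b ∈ V2 ∪ {u, v, w}),
        s(a, b) ∉ ({s(u, v), s(v, w), s(u, w)} : Set (Sym2 V)) → H2.Adj a b := by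
      intro ha hb hn
      rw [hH2, SimpleGraph.Subgraph.deleteEdges_adj, SimpleGraph.Subgraph.induce_adj]
      exact ⟨⟨ha, hb, hadj⟩, hn⟩
    rcases hcover a with ha | ha | ha
    · rcases hcover b with hb | hb | hb
      · exact Or.inl (mk1 (Or.inl ha) (Or.inl hb))
      · exact absurd hG (hnoedge a ha b hb)
      · exact Or.inl (mk1 (Or.inl ha) (Or.inr hb))
    · rcases hcover b with hb | hb | hb
      · exact absurd hG.symm (hnoedge b hb a ha)
      · exact Or.inr (mk2 (Or.inl ha) (Or.inl hb)
          (fun hmem => hV2T a ha (hmemT a b hmem).1))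
      · exact Or.inr (mk2 (Or.inl ha) (Or.inr hb)
          (fun hmem => hV2T a ha (hmemT a b hmem).1))
    · rcases hcover b with hb | hb | hb
      · exact Or.inl (mk1 (Or.inr ha) (Or.inl hb))
      · exact Or.inr (mk2 (Or.inr ha) (Or.inl hb)
          (fun hmem => hV2T b hb (hmemT a b hmem).2))
      · exact Or.inl (mk1 (Or.inr ha) (Or.inr hb))
  -- spanningCoe commutes with deleting edges
  have hspanDel : ∀ (K : G.Subgraph) (s : Set (Sym2 V)),
      (K.deleteEdges s).spanningCoe = K.spanningCoe.deleteEdges s := by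
    intro K s
    ext c d
    simp only [SimpleGraph.Subgraph.spanningCoe_adj, SimpleGraph.Subgraph.deleteEdges_adj,
      SimpleGraph.deleteEdges_adj]
  refine ⟨hsp, hconn, ?_⟩
  intro e he
  induction e using Sym2.ind with
  | _ a b =>
  have hab : H.Adj a b := SimpleGraph.Subgraph.mem_edgeSet.mp he
  -- side-to-deleted-graph monotonicity
  have hSideDel : ∀ (K : G.Subgraph), (∀ ⦃c d : V⦄, K.Adj c d → H.Adj c d) →
      K.spanningCoe.deleteEdges {s(a, b)} ≤ H.spanningCoe.deleteEdges {s(a, b)} := by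
    intro K hK c d hcd
    rw [SimpleGraph.deleteEdges_adj] at hcd ⊢
    exact ⟨hK hcd.1, hcd.2⟩
  -- the other side avoids the edge s(a,b)
  have hOther : ∀ (Ki Kj : G.Subgraph), (∀ ⦃c d : V⦄, Kj.Adj c d → H.Adj c d) →
      Ki.Adj a b → (∀ c d : V, Ki.Adj c d → ¬ Kj.Adj c d) →
      Kj.spanningCoe ≤ H.spanningCoe.deleteEdges {s(a, b)} := by
    intro Ki Kj hKjle hKi hdisj' c d hcd
    rw [SimpleGraph.deleteEdges_adj]
    refine ⟨hKjle hcd, ?_⟩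
    simp only [Set.mem_singleton_iff]
    intro hcd_eq
    rcases Sym2.eq_iff.mp hcd_eq with ⟨rfl, rfl⟩ | ⟨rfl, rfl⟩
    · exact hdisj' c d hKi hcd
    · exact hdisj' d c hKi hcd.symm
  -- the key reachability fact
  have hkey : (H.spanningCoe.deleteEdges {s(a, b)}).Reachable a b := by
    rcases hclass a b hab with hi | hi
    · rcases hcond1 a b hi with hsame | ⟨x, hx, y, hy, hxy, ⟨p, hp, hep⟩, hreach⟩
      · have h2 := hsame.2 (s(a, b)) (SimpleGraph.Subgraph.mem_edgeSet.mpr hi)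
        rw [hspanDel] at h2
        exact h2.mono (hSideDel H1 hle1)
      · have hO : H2.spanningCoe ≤ H.spanningCoe.deleteEdges {s(a, b)} :=
          hOther H1 H2 hle2 hi hnotboth
        rcases ecss_trail_split p hp.isTrail hep with ⟨h1, h2⟩ | ⟨h1, h2⟩
        · exact ((h1.mono (hSideDel H1 hle1)).symm.trans (hreach.mono hO)).trans
            (h2.mono (hSideDel H1 hle1)).symm
        · exact ((h2.mono (hSideDel H1 hle1)).trans (hreach.mono hO).symm).trans
            (h1.mono (hSideDel H1 hle1))
    · rcases hcond2 a b hi with hsame | ⟨x, hx, y, hy, hxy, ⟨p, hp, hep⟩, hreach⟩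
      · have h2 := hsame.2 (s(a, b)) (SimpleGraph.Subgraph.mem_edgeSet.mpr hi)
        rw [hspanDel] at h2
        exact h2.mono (hSideDel H2 hle2)
      · have hO : H1.spanningCoe ≤ H.spanningCoe.deleteEdges {s(a, b)} :=
          hOther H2 H1 hle1 hi (fun c d h2 h1 => hnotboth c d h1 h2)
        rcases ecss_trail_split p hp.isTrail hep with ⟨h1, h2⟩ | ⟨h1, h2⟩
        · exact ((h1.mono (hSideDel H2 hle2)).symm.trans (hreach.mono hO)).trans
            (h2.mono (hSideDel H2 hle2)).symm
        · exact ((h2.mono (hSideDel H2 hle2)).trans (hreach.mono hO).symm).trans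
            (h1.mono (hSideDel H2 hle2))
  -- all pairs are reachable after deleting the edge
  have hall : ∀ x y : V, (H.spanningCoe.deleteEdges {s(a, b)}).Reachable x y := by
    intro x y
    have hxy : H.spanningCoe.Reachable x y :=
      ecss_coe_reach (hconn ⟨x, hsp x⟩ ⟨y, hsp y⟩)
    exact ecss_walk_reach hkey hxy
  -- conclude connectivity of the subgraph with the edge deleted
  have hverts : ∀ z : V, z ∈ (H.deleteEdges {s(a, b)}).verts := by
    intro z
    rw [SimpleGraph.Subgraph.deleteEdges_verts]
    exact hsp z
  rw [SimpleGraph.Subgraph.connected_iff]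
  constructor
  · constructor
    rintro ⟨x, hx⟩ ⟨y, hy⟩
    have hr : (H.deleteEdges {s(a, b)}).spanningCoe.Reachable x y := by
      rw [hspanDel]
      exact hall x y
    exact ecss_reach_coe hverts hr
  · obtain ⟨x, -⟩ := Set.nonempty_of_ncard_ne_zero (by omega : V1.ncard ≠ 0)
    exact ⟨x, hverts x⟩
end
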